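/- Every cycle C_n with n ≠ 5 is star 3-edge-choosable: for every assignment L of lists of at least 3 colors to the edges of C_n, there is a star edge coloring φ of C_n with φ(e) ∈ L(e) for every edge e. -/

import Mathlib

open SimpleGraph

namespace StarCycleAux

lemma exists_avoid {s : Finset ℕ} (hs : 3 ≤ s.card) (a b : ℕ) :
    ∃ z ∈ s, z ≠ a ∧ z ≠ b := by
  have hne : (s \ {a, b}).Nonempty := by
    rw [← Finset.card_pos]
    have h1 : s.card ≤ (s \ {a, b}).card + ({a, b} : Finset ℕ).card :=
      Finset.card_le_card_sdiff_add_card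
    have h2 : ({a, b} : Finset ℕ).card ≤ 2 :=
      (Finset.card_insert_le _ _).trans (by simp)
    omega
  obtain ⟨z, hz⟩ := hne
  rw [Finset.mem_sdiff] at hz
  exact ⟨z, hz.1, by have := hz.2; simp at this; tauto⟩

noncomputable def pick (s : Finset ℕ) (a b : ℕ) : ℕ :=
  if h : (s \ {a, b}).Nonempty then h.choose else 0

lemma pick_spec {s : Finset ℕ} (hs : 3 ≤ s.card) (a b : ℕ) :
    pick s a b ∈ s ∧ pick s a b ≠ a ∧ pick s a b ≠ b := by
  have hne : (s \ {a, b}).Nonempty := by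
    rw [← Finset.card_pos]
    have h1 : s.card ≤ (s \ {a, b}).card + ({a, b} : Finset ℕ).card :=
      Finset.card_le_card_sdiff_add_card
    have h2 : ({a, b} : Finset ℕ).card ≤ 2 :=
      (Finset.card_insert_le _ _).trans (by simp)
    omega
  rw [pick, dif_pos hne]
  have := hne.choose_spec
  rw [Finset.mem_sdiff] at this
  refine ⟨this.1, ?_, ?_⟩ <;> · have := this.2; simp at this; tauto

noncomputable def chainP (LL : ℕ → Finset ℕ) : ℕ → ℕ × ℕ
  | 0 => (pick (LL 0) 0 0, pick (LL 1) (pick (LL 0) 0 0) (pick (LL 0) 0 0))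
  | k+1 => ((chainP LL k).2, pick (LL (k+2)) (chainP LL k).2 (chainP LL k).1)

variable {LL : ℕ → Finset ℕ} (hLL : ∀ k, 3 ≤ (LL k).card)

include hLL

lemma chainP_mem (k : ℕ) : (chainP LL k).1 ∈ LL k ∧ (chainP LL k).2 ∈ LL (k+1) := by
  induction k with
  | zero => exact ⟨(pick_spec (hLL 0) _ _).1, (pick_spec (hLL 1) _ _).1⟩
  | succ k ih => exact ⟨ih.2, (pick_spec (hLL (k+2)) _ _).1⟩

lemma chainP_ne (k : ℕ) : (chainP LL k).2 ≠ (chainP LL k).1 := by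
  cases k with
  | zero => exact (pick_spec (hLL 1) _ _).2.1
  | succ k => exact (pick_spec (hLL (k+2)) _ _).2.1

lemma chainP_ne2 (k : ℕ) : (chainP LL (k+1)).2 ≠ (chainP LL k).1 :=
  (pick_spec (hLL (k+2)) _ _).2.2

omit hLL

/-- The greedy chain. -/
noncomputable def ch (LL : ℕ → Finset ℕ) (k : ℕ) : ℕ := (chainP LL k).1

lemma ch_succ (k : ℕ) : ch LL (k+1) = (chainP LL k).2 := by
  rw [ch, chainP]

include hLL

lemma ch_mem (k : ℕ) : ch LL k ∈ LL k := (chainP_mem hLL k).1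

lemma ch_succ_ne (k : ℕ) : ch LL (k+1) ≠ ch LL k := by
  rw [ch_succ]; exact chainP_ne hLL k

lemma ch_succ2_ne (k : ℕ) : ch LL (k+2) ≠ ch LL k := by
  rw [show k+2 = (k+1)+1 from rfl, ch_succ]; exact chainP_ne2 hLL k

omit hLL

lemma card3 {A B C D : ℕ} (hAB : A ≠ B) (hBC : B ≠ C) (hCD : C ≠ D)
    (hACBD : ¬(A = C ∧ B = D)) : 3 ≤ ({A, B, C, D} : Finset ℕ).card := by
  by_cases hAC : A = C
  · have hBD : B ≠ D := fun h => hACBD ⟨hAC, h⟩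
    have hsub : ({B, C, D} : Finset ℕ) ⊆ {A, B, C, D} := by
      intro z hz; simp at hz ⊢; tauto
    refine le_trans ?_ (Finset.card_le_card hsub)
    rw [Finset.card_insert_of_notMem (by simp [hBC, hBD]),
      Finset.card_insert_of_notMem (by simp [hCD]), Finset.card_singleton]
  · have hsub : ({A, B, C} : Finset ℕ) ⊆ {A, B, C, D} := by
      intro z hz; simp at hz ⊢; tauto
    refine le_trans ?_ (Finset.card_le_card hsub)
    rw [Finset.card_insert_of_notMem (by simp [hAB, hAC]),
      Finset.card_insert_of_notMem (by simp [hBC]), Finset.card_singleton]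

open Fin.NatCast Fin.CommRing in
/-- The key combinatorial lemma: list colorings of the cyclic sequence. -/
lemma combo (n : ℕ) (hn : 3 ≤ n) (h5 : n ≠ 5) [NeZero n] (M : Fin n → Finset ℕ)
    (hM : ∀ i, 3 ≤ (M i).card) :
    ∃ g : Fin n → ℕ, (∀ i, g i ∈ M i) ∧ (∀ i, g i ≠ g (i + 1)) ∧
      ∀ i, ¬(g i = g (i + 2) ∧ g (i + 1) = g (i + 3)) := by
  have hcases : n = 3 ∨ n = 4 ∨ 6 ≤ n := by omega
  rcases hcases with rfl | rfl | h6
  · -- n = 3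
    obtain ⟨u0, m0, -, -⟩ := exists_avoid (hM 0) 0 0
    obtain ⟨u1, m1, n10, -⟩ := exists_avoid (hM 1) u0 u0
    obtain ⟨u2, m2, n20, n21⟩ := exists_avoid (hM 2) u0 u1
    refine ⟨![u0, u1, u2], ?_, ?_, ?_⟩
    · intro i; fin_cases i <;> simpa
    · intro i; fin_cases i <;> simp <;> tauto
    · intro i; fin_cases i <;> simp <;> tauto
  · -- n = 4
    obtain ⟨u0, m0, -, -⟩ := exists_avoid (hM 0) 0 0
    obtain ⟨u1, m1, n10, -⟩ := exists_avoid (hM 1) u0 u0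
    obtain ⟨u2, m2, n21, n20⟩ := exists_avoid (hM 2) u1 u0
    obtain ⟨u3, m3, n32, n30⟩ := exists_avoid (hM 3) u2 u0
    refine ⟨![u0, u1, u2, u3], ?_, ?_, ?_⟩
    · intro i; fin_cases i <;> simpa
    · intro i; fin_cases i <;> simp <;> tauto
    · intro i; fin_cases i <;> simp <;> tauto
  · -- n ≥ 6
    obtain ⟨m, rfl⟩ : ∃ m, n = m + 6 := ⟨n - 6, by omega⟩
    have h1 : ((1 : Fin (m+6))).val = 1 := by
      rw [Fin.val_one']; exact Nat.mod_eq_of_lt (by omega)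
    have h2 : ((2 : Fin (m+6))).val = 2 := by
      exact Nat.mod_eq_of_lt (show 2 < m + 6 by omega)
    have h3 : ((3 : Fin (m+6))).val = 3 := by
      rw [show (3 : Fin (m+6)) = 2 + 1 by ring, Fin.val_add, h1, h2]
      exact Nat.mod_eq_of_lt (by omega)
    set LN : ℕ → Finset ℕ := fun j => M (j : Fin (m+6)) with hLNdef
    have hLN : ∀ j, 3 ≤ (LN j).card := fun j => hM _
    set LL : ℕ → Finset ℕ := fun k => LN (k + 2) with hLLdef
    have hLL : ∀ k, 3 ≤ (LL k).card := fun k => hLN _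
    obtain ⟨su1, su2, su3⟩ := pick_spec (hLN 0) (ch LL (m+2)) (ch LL 0)
    set u := pick (LN 0) (ch LL (m+2)) (ch LL 0) with hu
    obtain ⟨sv1, sv2, sv3⟩ := pick_spec (hLN 1) u (ch LL 0)
    set v := pick (LN 1) u (ch LL 0) with hv
    obtain ⟨sx1, sx2, sx3⟩ := pick_spec (hLN (m+5)) (ch LL (m+2)) u
    set x := pick (LN (m+5)) (ch LL (m+2)) u with hx
    set G : ℕ → ℕ := fun j => if j = 0 then u else if j = 1 then v
      else if j = m + 5 then x else ch LL (j - 2) with hG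
    have hG0 : G 0 = u := by simp [hG]
    have hG1 : G 1 = v := by simp [hG]
    have hGlast : G (m + 5) = x := by
      simp only [hG]
      rw [if_neg (by omega), if_neg (by omega)]
      simp
    have hGmid : ∀ j, 2 ≤ j → j ≤ m + 4 → G j = ch LL (j - 2) := by
      intro j hj1 hj2
      simp only [hG]
      rw [if_neg (by omega), if_neg (by omega), if_neg (by omega)]
    refine ⟨fun i => G i.val, ?_, ?_, ?_⟩
    · -- membership
      intro i
      show G i.val ∈ M i
      have hMi : LN i.val = M i := by
        rw [hLNdef]; exact congrArg M (Fin.cast_val_eq_self i)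
      rw [← hMi]
      have hiN : i.val < m + 6 := i.2
      rcases Nat.lt_or_ge i.val 2 with hlt | hge
      · interval_cases hi : i.val
        · rw [hG0]; exact su1
        · rw [hG1]; exact sv1
      · by_cases hlast : i.val = m + 5
        · rw [hlast, hGlast]; exact sx1
        · rw [hGmid i.val hge (by omega)]
          have := ch_mem hLL (i.val - 2)
          rw [hLLdef] at this
          simpa [Nat.sub_add_cancel hge] using this
    · -- properness
      intro i
      show G i.val ≠ G (i + 1).val
      have hiN : i.val < m + 6 := i.2
      have v1 : (i + 1).val = (i.val + 1) % (m + 6) := by rw [Fin.val_add, h1]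
      by_cases hlast : i.val = m + 5
      · have e : i.val + 1 = m + 6 := by omega
        rw [v1, e, Nat.mod_self, hG0, hlast, hGlast]
        exact sx3
      · rw [v1, Nat.mod_eq_of_lt (by omega)]
        rcases Nat.lt_or_ge i.val 2 with hlt | hge
        · interval_cases hi : i.val
          · rw [hG0, hG1]; exact fun h => sv2 h.symm
          · rw [hG1, hGmid 2 (by omega) (by omega)]
            simpa using sv3
        · by_cases h4 : i.val = m + 4
          · rw [h4, hGmid (m+4) (by omega) (by omega), hGlast]
            have : m + 4 - 2 = m + 2 := by omega
            rw [this]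
            exact fun h => sx2 h.symm
          · rw [hGmid i.val hge (by omega), hGmid (i.val + 1) (by omega) (by omega)]
            have e1 : i.val + 1 - 2 = (i.val - 2) + 1 := by omega
            rw [e1]
            exact (ch_succ_ne hLL (i.val - 2)).symm
    · -- star condition
      intro i
      show ¬(G i.val = G (i+2).val ∧ G (i+1).val = G (i+3).val)
      have hiN : i.val < m + 6 := i.2
      have v1 : (i + 1).val = (i.val + 1) % (m + 6) := by rw [Fin.val_add, h1]
      have v2 : (i + 2).val = (i.val + 2) % (m + 6) := by rw [Fin.val_add, h2]
      have v3 : (i + 3).val = (i.val + 3) % (m + 6) := by rw [Fin.val_add, h3]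
      rintro ⟨hA, hB⟩
      rcases Nat.lt_or_ge i.val 2 with hlt | hge
      · interval_cases hi : i.val
        · -- i = 0 : u = G 2 = ch 0
          rw [v2, Nat.mod_eq_of_lt (by omega), hG0, hGmid 2 (by omega) (by omega)] at hA
          exact su3 (by simpa using hA)
        · -- i = 1 : G 2 = G 4
          rw [v1, v3, Nat.mod_eq_of_lt (by omega), Nat.mod_eq_of_lt (by omega),
            hGmid 2 (by omega) (by omega), hGmid 4 (by omega) (by omega)] at hB
          exact (ch_succ2_ne hLL 0) (by simpa using hB.symm)
      · by_cases hk2 : i.val ≤ m + 2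
        · -- middle : ch (k-2) = ch k
          rw [v2, Nat.mod_eq_of_lt (by omega), hGmid i.val hge (by omega),
            hGmid (i.val + 2) (by omega) (by omega)] at hA
          have e1 : i.val + 2 - 2 = (i.val - 2) + 2 := by omega
          rw [e1] at hA
          exact (ch_succ2_ne hLL (i.val - 2)) hA.symm
        · by_cases hk3 : i.val = m + 3
          · -- G (m+4) = G 0 : y = u
            have e1 : (m+3+1) % (m+6) = m + 4 := Nat.mod_eq_of_lt (by omega)
            have e2 : (m+3+3) % (m+6) = 0 := by
              rw [show m+3+3 = m+6 from by omega, Nat.mod_self]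
            rw [v1, v3, hk3, e1, e2, hGmid (m+4) (by omega) (by omega), hG0] at hB
            have : m + 4 - 2 = m + 2 := by omega
            rw [this] at hB
            exact su2 hB.symm
          · by_cases hk4 : i.val = m + 4
            · have e2 : (m+4+2) % (m+6) = 0 := by
                rw [show m+4+2 = m+6 from by omega, Nat.mod_self]
              rw [v2, hk4, e2, hGmid (m+4) (by omega) (by omega), hG0] at hA
              have : m + 4 - 2 = m + 2 := by omega
              rw [this] at hA
              exact su2 hA.symm
            · -- i.val = m + 5 : G 0 = G 2
              have hk5 : i.val = m + 5 := by omega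
              have e1 : (m+5+1) % (m+6) = 0 := by
                rw [show m+5+1 = m+6 from by omega, Nat.mod_self]
              have e2 : (m+5+3) % (m+6) = 2 := by
                rw [show m+5+3 = (m+6) + 2 from by omega, Nat.add_mod_left]
                exact Nat.mod_eq_of_lt (by omega)
              rw [v1, v3, hk5, e1, e2, hG0, hGmid 2 (by omega) (by omega)] at hB
              exact su3 (by simpa using hB)

end StarCycleAux

/-- A star edge coloring: a proper edge coloring with no 2-colored path or cycle
on four edges. For proper colorings, this is equivalent to requiring that every
walk of length 4 with pairwise distinct edges sees at least 3 colors. -/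
def IsStarEdgeColoring {V β : Type*} [DecidableEq β] (G : SimpleGraph V)
    (c : Sym2 V → β) : Prop :=
  (∀ ⦃e₁⦄, e₁ ∈ G.edgeSet → ∀ ⦃e₂⦄, e₂ ∈ G.edgeSet → e₁ ≠ e₂ →
      (∃ v, v ∈ e₁ ∧ v ∈ e₂) → c e₁ ≠ c e₂) ∧
  ∀ (u v : V) (p : G.Walk u v), p.length = 4 → p.edges.Nodup →
    3 ≤ (p.edges.map c).toFinset.card

/-- The star chromatic index: the least `n` such that `G` has a star edge
coloring with colors in `Fin n`. -/
noncomputable def starChromaticIndex {V : Type*} (G : SimpleGraph V) : ℕ :=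
  sInf {n | ∃ c : Sym2 V → Fin n, IsStarEdgeColoring G c}

open Fin.CommRing in
theorem cycle_star_three_choosable (n : ℕ) (hn : 3 ≤ n) (h5 : n ≠ 5)
    (L : Sym2 (Fin n) → Finset ℕ)
    (hL : ∀ e ∈ (cycleGraph n).edgeSet, 3 ≤ (L e).card) :
    ∃ c : Sym2 (Fin n) → ℕ, IsStarEdgeColoring (cycleGraph n) c ∧
      ∀ e ∈ (cycleGraph n).edgeSet, c e ∈ L e := by
  haveI : NeZero n := ⟨by omega⟩
  have h1 : ((1 : Fin n)).val = 1 := by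
    rw [Fin.val_one']; exact Nat.mod_eq_of_lt (by omega)
  have adj_iff : ∀ u v : Fin n, (cycleGraph n).Adj u v ↔ v = u + 1 ∨ u = v + 1 := by
    intro u v
    rw [cycleGraph_adj']
    have e1 : ∀ a b : Fin n, (a - b).val = 1 ↔ a = b + 1 := by
      intro a b
      constructor
      · intro hh
        have : a - b = 1 := by ext; rw [h1]; exact hh
        rw [← this]; ring
      · intro hh; subst hh; rw [show b + 1 - b = 1 by ring, h1]
    rw [e1, e1]
    tauto
  have hedge : ∀ i : Fin n, s(i, i + 1) ∈ (cycleGraph n).edgeSet := by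
    intro i
    rw [mem_edgeSet, adj_iff]
    left; rfl
  obtain ⟨g, hmem, hP, hS⟩ := StarCycleAux.combo n hn h5 (fun i => L s(i, i + 1))
    (fun i => hL _ (hedge i))
  have h20 : (2 : Fin n) ≠ 0 := by
    intro hcon
    have h2 : ((2 : Fin n)).val = 2 := by
      exact Nat.mod_eq_of_lt (show 2 < n by omega)
    rw [hcon] at h2
    simp at h2
  have hne2 : ∀ a : Fin n, ¬(a = a + 1 + 1) := by
    intro a hcontra
    have : a + 2 = a + 0 := by
      rw [show a + 2 = a + 1 + 1 by ring, ← hcontra, add_zero]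
    exact h20 (add_left_cancel this)
  have hFsymm : ∀ i j : Fin n,
      (if j = i + 1 then g i else if i = j + 1 then g j else 0) =
      (if i = j + 1 then g j else if j = i + 1 then g i else 0) := by
    intro i j
    by_cases hji : j = i + 1 <;> by_cases hij : i = j + 1
    · exfalso
      rw [hji] at hij
      exact hne2 i hij
    · simp [hji, hij, hne2 i]
    · simp [hji, hij, hne2 j]
    · simp [hji, hij]
  set c : Sym2 (Fin n) → ℕ :=
    Sym2.lift ⟨fun i j => if j = i + 1 then g i else if i = j + 1 then g j else 0,
      hFsymm⟩ with hc
  have hcE : ∀ i : Fin n, c s(i, i + 1) = g i := by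
    intro i
    rw [hc, Sym2.lift_mk]
    simp
  have hclass : ∀ e ∈ (cycleGraph n).edgeSet, ∃ i : Fin n, e = s(i, i + 1) := by
    intro e he
    induction e with
    | _ a b =>
      rw [mem_edgeSet, adj_iff] at he
      rcases he with hh | hh
      · exact ⟨a, by rw [hh]⟩
      · exact ⟨b, by rw [hh]; exact Sym2.eq_swap⟩
  refine ⟨c, ⟨?_, ?_⟩, ?_⟩
  · -- properness
    intro e₁ he₁ e₂ he₂ hne hshare
    obtain ⟨i, rfl⟩ := hclass e₁ he₁
    obtain ⟨j, rfl⟩ := hclass e₂ he₂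
    obtain ⟨w, hw1, hw2⟩ := hshare
    rw [Sym2.mem_iff] at hw1 hw2
    rw [hcE, hcE]
    rcases hw1 with rfl | rfl
    · rcases hw2 with rfl | hw
      · exact absurd rfl hne
      · rw [hw]
        exact (hP j).symm
    · rcases hw2 with hw | hw
      · rw [← hw]
        exact hP i
      · have hij : i = j := add_right_cancel hw
        subst hij
        exact absurd rfl hne
  · -- star walk condition
    intro u v p hlen hnd
    cases p with
    | nil => simp at hlen
    | cons h₁ q₁ =>
    rename_i b
    cases q₁ with
    | nil => simp at hlen
    | cons h₂ q₂ =>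
    rename_i d
    cases q₂ with
    | nil => simp at hlen
    | cons h₃ q₃ =>
    rename_i e
    cases q₃ with
    | nil => simp at hlen
    | cons h₄ q₄ =>
    cases q₄ with
    | cons h₅ q₅ => simp [SimpleGraph.Walk.length_cons] at hlen
    | nil =>
    clear hlen
    simp only [Walk.edges_cons, Walk.edges_nil] at hnd ⊢
    rcases (adj_iff _ _).1 h₁ with rfl | rfl
    · -- forward
      rcases (adj_iff _ _).1 h₂ with rfl | hcase
      swap
      · exfalso
        have hd : d = u := (add_right_cancel hcase).symm
        subst hd
        simp [Sym2.eq_swap] at hnd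
      rcases (adj_iff _ _).1 h₃ with rfl | hcase
      swap
      · exfalso
        have hd : e = u + 1 := (add_right_cancel hcase).symm
        subst hd
        simp [Sym2.eq_swap] at hnd
      rcases (adj_iff _ _).1 h₄ with rfl | hcase
      swap
      · exfalso
        have hd : v = u + 1 + 1 := (add_right_cancel hcase).symm
        subst hd
        simp [Sym2.eq_swap] at hnd
      simp only [List.map_cons, List.map_nil, List.toFinset_cons, List.toFinset_nil,
        LawfulSingleton.insert_empty_eq, hcE]
      have e2 : u + 1 + 1 = u + 2 := by ring
      have e3 : u + 1 + 1 + 1 = u + 3 := by ring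
      have e3' : u + 2 + 1 = u + 3 := by ring
      rw [e3, e2]
      refine StarCycleAux.card3 (hP u) ?_ ?_ (hS u)
      · have := hP (u + 1); rwa [e2] at this
      · have := hP (u + 2); rwa [e3'] at this
    · -- backward
      rcases (adj_iff _ _).1 h₂ with rfl | rfl
      · exfalso
        simp [Sym2.eq_swap] at hnd
      rcases (adj_iff _ _).1 h₃ with rfl | rfl
      · exfalso
        simp [Sym2.eq_swap] at hnd
      rcases (adj_iff _ _).1 h₄ with rfl | rfl
      · exfalso
        simp [Sym2.eq_swap] at hnd
      have sw : ∀ w : Fin n, c s(w + 1, w) = g w := by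
        intro w
        rw [Sym2.eq_swap, hcE]
      simp only [List.map_cons, List.map_nil, List.toFinset_cons, List.toFinset_nil,
        LawfulSingleton.insert_empty_eq, sw]
      have hset : ({g (v+1+1+1), g (v+1+1), g (v+1), g v} : Finset ℕ) =
          ({g v, g (v+1), g (v+1+1), g (v+1+1+1)} : Finset ℕ) := by
        ext z; simp; tauto
      rw [hset]
      have e2 : v + 1 + 1 = v + 2 := by ring
      have e3 : v + 1 + 1 + 1 = v + 3 := by ring
      have e3' : v + 2 + 1 = v + 3 := by ring
      rw [e3, e2]
      refine StarCycleAux.card3 (hP v) ?_ ?_ (hS v)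
      · have := hP (v + 1); rwa [e2] at this
      · have := hP (v + 2); rwa [e3'] at this
  · -- list membership
    intro e he
    obtain ⟨i, rfl⟩ := hclass e he
    rw [hcE]
    exact hmem i
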